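/- arXiv:1808.04237 — 3 statements merged into one kernel-verified Lean document; each statement's English description precedes it below -/
import Mathlib

section
/- In the commutative ring S = ℤ[a, λ]/⟨a⁴, λ⁶ + 4λ⁵a + 10λ⁴a² + 20λ³a³⟩, the coefficient of λ⁵a³ (with respect to the basis {λⁱaʲ : 0 ≤ i ≤ 5, 0 ≤ j ≤ 3}) in the element (λ + 2a)⁸ equals 92. -/
open MvPolynomial Finset

noncomputable section

/-- The ideal ⟨a⁴, λ⁶ + 4λ⁵a + 10λ⁴a² + 20λ³a³⟩ in ℤ[a, λ], with `X 0 = a`, `X 1 = λ`. -/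
def Icon : Ideal (MvPolynomial (Fin 2) ℤ) :=
  Ideal.span {(X 0 : MvPolynomial (Fin 2) ℤ) ^ 4,
    (X 1) ^ 6 + 4 * (X 1) ^ 5 * X 0 + 10 * (X 1) ^ 4 * (X 0) ^ 2 + 20 * (X 1) ^ 3 * (X 0) ^ 3}

/-- The ring S = ℤ[a, λ]/⟨a⁴, λ⁶ + 4λ⁵a + 10λ⁴a² + 20λ³a³⟩. -/
def Sg := MvPolynomial (Fin 2) ℤ ⧸ Icon

instance : CommRing Sg := Ideal.Quotient.commRing Icon

def ag : Sg := Ideal.Quotient.mk Icon (X 0)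
def lg : Sg := Ideal.Quotient.mk Icon (X 1)

/-- The coefficient of λ⁵a³ (w.r.t. the basis {λⁱaʲ : 0 ≤ i ≤ 5, 0 ≤ j ≤ 3}) in (λ + 2a)⁸
equals 92. -/
theorem stmt4 : ∃ c : Fin 6 → Fin 4 → ℤ,
    (lg + 2 * ag) ^ 8 =
      (∑ i : Fin 6, ∑ j : Fin 4, c i j • (lg ^ (i : ℕ) * ag ^ (j : ℕ))) ∧
    c 5 3 = 92 := by
  refine ⟨fun i j => if i = 5 ∧ j = 3 then 92 else 0, ?_, by norm_num⟩
  have key : (lg + 2 * ag) ^ 8 = (92 : ℤ) • (lg ^ 5 * ag ^ 3) := by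
    have h : (lg + 2 * ag) ^ 8 - (92 : ℤ) • (lg ^ 5 * ag ^ 3) =
        Ideal.Quotient.mk Icon ((X 1 + 2 * X 0) ^ 8 - 92 * (X 1) ^ 5 * (X 0) ^ 3) := by
      simp only [lg, ag, map_sub, map_add, map_mul, map_pow, map_ofNat, zsmul_eq_mul]
      push_cast
      rw [mul_assoc]
      rfl
    have hmem : ((X 1 + 2 * X 0) ^ 8 - 92 * (X 1) ^ 5 * (X 0) ^ 3 : MvPolynomial (Fin 2) ℤ)
        ∈ Icon := by
      rw [Icon, Ideal.mem_span_pair]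
      refine ⟨340 * (X 1) ^ 4 + 712 * (X 1) ^ 3 * X 0 + 1792 * (X 1) ^ 2 * (X 0) ^ 2
        + 1024 * X 1 * (X 0) ^ 3 + 256 * (X 0) ^ 4,
        (X 1) ^ 2 + 12 * X 1 * X 0 + 54 * (X 0) ^ 2, ?_⟩
      ring
    exact sub_eq_zero.mp (h.trans (Ideal.Quotient.eq_zero_iff_mem.mpr hmem))
  rw [key]
  simp only [Fin.sum_univ_succ, Fin.sum_univ_zero]
  norm_num [Fin.ext_iff, show ((5:Fin 6):ℕ)=5 from rfl, show ((3:Fin 4):ℕ)=3 from rfl]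

end
end

section
/- In the commutative ring S = ℤ[a, λ]/⟨a⁴, λ⁶ + 4λ⁵a + 10λ⁴a² + 20λ³a³⟩, the coefficient of λ⁵a³ in (λ + 2a)⁶·(λa) equals 18. -/
open MvPolynomial Finset

noncomputable section

/-- The coefficient of λ⁵a³ in (λ + 2a)⁶·(λa) equals 18. -/
theorem stmt5 : ∃ c : Fin 6 → Fin 4 → ℤ,
    (lg + 2 * ag) ^ 6 * (lg * ag) =
      (∑ i : Fin 6, ∑ j : Fin 4, c i j • (lg ^ (i : ℕ) * ag ^ (j : ℕ))) ∧
    c 5 3 = 18 := by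
  have ha : ag ^ 4 = 0 := by
    have h4 : (X 0 : MvPolynomial (Fin 2) ℤ) ^ 4 ∈ Icon := Ideal.subset_span (Or.inl rfl)
    have : ag ^ 4 = Ideal.Quotient.mk Icon ((X 0) ^ 4) := (map_pow _ _ _).symm
    refine this.trans ((Ideal.Quotient.eq_zero_iff_mem).2 ?_)
    exact h4
  have hrel : lg ^ 6 + 4 * lg ^ 5 * ag + 10 * lg ^ 4 * ag ^ 2 + 20 * lg ^ 3 * ag ^ 3 = 0 := by
    have : (Ideal.Quotient.mk Icon) ((X 1) ^ 6 + 4 * (X 1) ^ 5 * X 0 + 10 * (X 1) ^ 4 * (X 0) ^ 2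
        + 20 * (X 1) ^ 3 * (X 0) ^ 3) = 0 := by
      rw [Ideal.Quotient.eq_zero_iff_mem]
      exact Ideal.subset_span (Or.inr rfl)
    simp only [map_add, map_mul, map_pow, map_ofNat] at this
    exact this
  refine ⟨![![0,0,0,0],![0,0,0,0],![0,0,0,0],![0,0,0,0],![0,0,0,0],![0,0,0,18]], ?_, by decide⟩
  simp [Fin.sum_univ_succ]
  linear_combination (lg * ag + 8 * ag ^ 2) * hrel
    + (64 * lg * ag ^ 3 + 192 * lg ^ 2 * ag ^ 2 + 80 * lg ^ 3 * ag + 60 * lg ^ 4) * ha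

end
end

section
/- In the commutative ring S = ℤ[a, λ]/⟨a⁴, λ⁶ + 4λ⁵a + 10λ⁴a² + 20λ³a³⟩, the coefficient of λ⁵a³ in (λ + 2a)⁷·a equals 34, in (λ + 2a)⁶·a² equals 8, and in (λ + 2a)⁵·a³ equals 1. -/
open MvPolynomial Finset

noncomputable section

/-- The coefficient of λ⁵a³ in (λ + 2a)⁷·a equals 34, in (λ + 2a)⁶·a² equals 8, and in
(λ + 2a)⁵·a³ equals 1. -/
theorem stmt7 :
    (∃ c : Fin 6 → Fin 4 → ℤ,
      (lg + 2 * ag) ^ 7 * ag =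
        (∑ i : Fin 6, ∑ j : Fin 4, c i j • (lg ^ (i : ℕ) * ag ^ (j : ℕ))) ∧
      c 5 3 = 34) ∧
    (∃ c : Fin 6 → Fin 4 → ℤ,
      (lg + 2 * ag) ^ 6 * ag ^ 2 =
        (∑ i : Fin 6, ∑ j : Fin 4, c i j • (lg ^ (i : ℕ) * ag ^ (j : ℕ))) ∧
      c 5 3 = 8) ∧
    (∃ c : Fin 6 → Fin 4 → ℤ,
      (lg + 2 * ag) ^ 5 * ag ^ 3 =
        (∑ i : Fin 6, ∑ j : Fin 4, c i j • (lg ^ (i : ℕ) * ag ^ (j : ℕ))) ∧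
      c 5 3 = 1) := by

  have ha : ag ^ 4 = 0 := by
    have h : (Ideal.Quotient.mk Icon) ((X 0 : MvPolynomial (Fin 2) ℤ) ^ 4) = 0 :=
      Ideal.Quotient.eq_zero_iff_mem.2 (Ideal.subset_span (Or.inl rfl))
    simp only [ag, map_pow] at h ⊢
    exact h
  have hl : lg ^ 6 + 4 * lg ^ 5 * ag + 10 * lg ^ 4 * ag ^ 2 + 20 * lg ^ 3 * ag ^ 3 = 0 := by
    have : ((X 1 : MvPolynomial (Fin 2) ℤ) ^ 6 + 4 * (X 1) ^ 5 * X 0 + 10 * (X 1) ^ 4 * (X 0) ^ 2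
        + 20 * (X 1) ^ 3 * (X 0) ^ 3) ∈ Icon := Ideal.subset_span (Or.inr rfl)
    have h := (Ideal.Quotient.eq_zero_iff_mem).2 this
    simp [lg, ag, map_add, map_mul, map_pow, map_ofNat] at h ⊢
    exact h
  refine ⟨⟨fun i j => if i = 5 ∧ j = 3 then 34 else 0, ?_, by norm_num⟩,
    ⟨fun i j => if i = 5 ∧ j = 3 then 8 else 0, ?_, by norm_num⟩,
    ⟨fun i j => if i = 5 ∧ j = 3 then 1 else 0, ?_, by norm_num⟩⟩
  · simp only [Fin.sum_univ_succ, Fin.sum_univ_zero, Fin.ext_iff]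
    norm_num [show ((5 : Fin 6) : ℕ) = 5 from rfl, show ((3 : Fin 4) : ℕ) = 3 from rfl]
    linear_combination (lg * ag + 10 * ag ^ 2) * hl +
      (160 * lg ^ 4 + 360 * lg ^ 3 * ag + 672 * lg ^ 2 * ag ^ 2 + 448 * lg * ag ^ 3
        + 128 * ag ^ 4) * ha
  · simp only [Fin.sum_univ_succ, Fin.sum_univ_zero, Fin.ext_iff]
    norm_num [show ((5 : Fin 6) : ℕ) = 5 from rfl, show ((3 : Fin 4) : ℕ) = 3 from rfl]
    linear_combination (ag ^ 2) * hl +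
      (50 * lg ^ 4 + 140 * lg ^ 3 * ag + 240 * lg ^ 2 * ag ^ 2 + 192 * lg * ag ^ 3
        + 64 * ag ^ 4) * ha
  · simp only [Fin.sum_univ_succ, Fin.sum_univ_zero, Fin.ext_iff]
    norm_num [show ((5 : Fin 6) : ℕ) = 5 from rfl, show ((3 : Fin 4) : ℕ) = 3 from rfl]
    linear_combination (10 * lg ^ 4 + 40 * lg ^ 3 * ag + 80 * lg ^ 2 * ag ^ 2 + 80 * lg * ag ^ 3
        + 32 * ag ^ 4) * ha


end
end
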